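/- A point V* = (V*_1, …, V*_N) ∈ ℝ^N is an equilibrium of the volume-scavenging system (i.e. Σ_{i=1}^N c_{i,j} Δ_s(P(V*_i) − P(V*_j)) = 0 for every 1 ≤ j ≤ N) if and only if P(V*_i) = P(V*_j) for all 1 ≤ i, j ≤ N. -/
import Mathlib


/-- Droplet volume as a function of height: v(h) = h(h²+3)/4. -/
noncomputable def vol (h : ℝ) : ℝ := h * (h ^ 2 + 3) / 4

/-- Droplet pressure as a function of height: p(h) = 4h/(h²+1). -/
noncomputable def pres (h : ℝ) : ℝ := 4 * h / (h ^ 2 + 1)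

/-- Pressure as a function of volume: P(V) = p(h) where v(h) = V
(v is a strictly increasing bijection of ℝ, so its inverse is well defined). -/
noncomputable def Pfun (V : ℝ) : ℝ := pres (Function.invFun vol V)

/-- Δ_s(x) = |x|^s sgn(x). -/
noncomputable def Ds (s x : ℝ) : ℝ := |x| ^ s * Real.sign x

lemma Ds_zero (s : ℝ) : Ds s 0 = 0 := by
  simp [Ds, Real.sign_zero]

lemma Ds_nonpos {s x : ℝ} (hx : x ≤ 0) : Ds s x ≤ 0 := by
  rcases lt_or_eq_of_le hx with h | h
  · have : Real.sign x = -1 := Real.sign_of_neg h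
    rw [Ds, this]
    have : (0:ℝ) ≤ |x| ^ s := Real.rpow_nonneg (abs_nonneg x) s
    nlinarith
  · subst h; simp [Ds_zero]

lemma Ds_eq_zero {s x : ℝ} (hs : 0 < s) (h : Ds s x = 0) : x = 0 := by
  by_contra hx
  rcases lt_or_gt_of_ne hx with hlt | hgt
  · have h1 : Real.sign x = -1 := Real.sign_of_neg hlt
    have h2 : (0:ℝ) < |x| ^ s := Real.rpow_pos_of_pos (abs_pos.mpr hx) s
    rw [Ds, h1] at h
    nlinarith
  · have h1 : Real.sign x = 1 := Real.sign_of_pos hgt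
    have h2 : (0:ℝ) < |x| ^ s := Real.rpow_pos_of_pos (abs_pos.mpr hx) s
    rw [Ds, h1] at h
    nlinarith

theorem stmt7 (N : ℕ) (hN : 2 ≤ N) (s : ℝ) (hs : 0 < s)
    (c : Fin N → Fin N → ℝ)
    (hsymm : ∀ i j, c i j = c j i)
    (hnonneg : ∀ i j, 0 ≤ c i j)
    (hdiag : ∀ i, c i i = 0)
    (hconn : (SimpleGraph.fromRel (fun i j => 0 < c i j)).Connected)
    (Vstar : Fin N → ℝ) :
    (∀ j, ∑ i, c i j * Ds s (Pfun (Vstar i) - Pfun (Vstar j)) = 0) ↔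
      ∀ i j, Pfun (Vstar i) = Pfun (Vstar j) := by
  set f : Fin N → ℝ := fun i => Pfun (Vstar i) with hf
  constructor
  · intro heq
    haveI : Nonempty (Fin N) := Fin.pos_iff_nonempty.mp (by omega)
    obtain ⟨j₀, hj₀⟩ := Finite.exists_max f
    -- key step: along an edge from a max vertex, f stays max
    have key : ∀ a b : Fin N,
        (SimpleGraph.fromRel (fun i j => 0 < c i j)).Adj a b →
        f a = f j₀ → f b = f j₀ := by
      intro a b hadj ha
      rw [SimpleGraph.fromRel_adj] at hadj
      have hcba : 0 < c b a := by
        rcases hadj.2 with h | h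
        · rw [hsymm] at h; exact h
        · exact h
      have hsum := heq a
      have hterms : ∀ i ∈ Finset.univ,
          c i a * Ds s (f i - f a) ≤ 0 := by
        intro i _
        have : f i - f a ≤ 0 := by
          have := hj₀ i; rw [ha]; linarith
        exact mul_nonpos_of_nonneg_of_nonpos (hnonneg i a) (Ds_nonpos this)
      have hzero := (Finset.sum_eq_zero_iff_of_nonpos hterms).mp hsum b
        (Finset.mem_univ b)
      have hds : Ds s (f b - f a) = 0 := by
        rcases mul_eq_zero.mp hzero with h | h
        · exact absurd h (ne_of_gt hcba)
        · exact h
      have := Ds_eq_zero hs hds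
      rw [← ha]; linarith
    intro i j
    have hwalk : ∀ a b, (SimpleGraph.fromRel (fun i j => 0 < c i j)).Walk a b →
        f a = f j₀ → f b = f j₀ := by
      intro a b w
      induction w with
      | nil => exact id
      | cons h w ih => intro ha; exact ih (key _ _ h ha)
    have hall : ∀ k, f k = f j₀ := by
      intro k
      obtain ⟨w⟩ := (hconn j₀ k)
      exact hwalk j₀ k w rfl
    rw [show Pfun (Vstar i) = f i from rfl, show Pfun (Vstar j) = f j from rfl,
      hall i, hall j]
  · intro hP j
    apply Finset.sum_eq_zero
    intro i _
    rw [hP i j, sub_self, Ds_zero, mul_zero]
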